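/- Let Λ be a discrete additive subgroup of ℝ^n containing a nonzero element, and let d(Λ) denote the minimum of ‖x‖² over nonzero x ∈ Λ. For every ε with 0 < ε ≤ 1/4, every r ≥ 0 with r ≤ d(Λ)·(1/2 − ε), and every y ∈ ℝ^n, the set {x ∈ Λ : ‖x − y‖² ≤ r} is finite with at most 1/(2ε) elements. -/

import Mathlib

open Finset

/-- Johnson-type bound on list size (first case): if `r ≤ d(Λ)·(1/2 − ε)` with
`0 < ε ≤ 1/4`, then the list `Λ ∩ B_r(y)` is finite with at most `1/(2ε)` elements. -/
theorem stmt_0 {n : ℕ} (Λ : AddSubgroup (EuclideanSpace ℝ (Fin n)))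
    [DiscreteTopology Λ]
    (hΛne : ∃ x ∈ Λ, x ≠ (0 : EuclideanSpace ℝ (Fin n)))
    (dΛ : ℝ)
    (hdΛ : IsLeast {d : ℝ | ∃ x ∈ Λ, x ≠ (0 : EuclideanSpace ℝ (Fin n)) ∧ ‖x‖ ^ 2 = d} dΛ)
    (ε r : ℝ) (hε : 0 < ε) (hε4 : ε ≤ 1 / 4)
    (hr0 : 0 ≤ r) (hr : r ≤ dΛ * (1 / 2 - ε))
    (y : EuclideanSpace ℝ (Fin n)) :
    {x : EuclideanSpace ℝ (Fin n) | x ∈ Λ ∧ ‖x - y‖ ^ 2 ≤ r}.Finite ∧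
      (({x : EuclideanSpace ℝ (Fin n) | x ∈ Λ ∧ ‖x - y‖ ^ 2 ≤ r}.ncard : ℝ) ≤ 1 / (2 * ε)) := by
  set S := {x : EuclideanSpace ℝ (Fin n) | x ∈ Λ ∧ ‖x - y‖ ^ 2 ≤ r} with hS
  have hεpos : (0:ℝ) < 1 / (2*ε) := by positivity
  have key : ∀ t : Finset (EuclideanSpace ℝ (Fin n)), ↑t ⊆ S → (t.card : ℝ) ≤ 1 / (2*ε) := by
    classical
    intro t ht
    rcases eq_or_lt_of_le hr0 with hr0' | hrpos
    · -- r = 0 : all points equal y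
      have hsub : t ⊆ {y} := by
        intro x hx
        have hx' := ht hx
        have h2 : ‖x - y‖ ^ 2 ≤ 0 := by have := hx'.2; linarith
        have h0 : ‖x - y‖ = 0 := by nlinarith [norm_nonneg (x - y)]
        have : x - y = 0 := by simpa using h0
        have : x = y := by rwa [sub_eq_zero] at this
        simp [this]
      have hc : t.card ≤ 1 := le_trans (Finset.card_le_card hsub) (by simp)
      have h1 : (t.card : ℝ) ≤ 1 := by exact_mod_cast hc
      have h2 : (1:ℝ) ≤ 1 / (2 * ε) := by
        rw [le_div_iff₀ (by positivity)]
        nlinarith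
      linarith
    · -- r > 0
      have hdpos : 0 < dΛ := by nlinarith
      rcases Nat.eq_zero_or_pos t.card with h0 | h1
      · rw [h0]; push_cast; positivity
      set m : ℝ := (t.card : ℝ) with hm
      have hm1 : (1:ℝ) ≤ m := by
        have h1' : 1 ≤ t.card := h1
        rw [hm]; exact_mod_cast h1'
      have hdiag : ∀ x ∈ t, (inner ℝ (x - y) (x - y) : ℝ) ≤ r := by
        intro x hx
        rw [real_inner_self_eq_norm_sq]
        exact (ht hx).2
      have hoff : ∀ x ∈ t, ∀ z ∈ t, x ≠ z → (inner ℝ (x - y) (z - y) : ℝ) ≤ r - dΛ/2 := by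
        intro x hx z hz hxz
        have hxS := ht hx; have hzS := ht hz
        have hmem : x - z ∈ Λ := sub_mem hxS.1 hzS.1
        have hne : x - z ≠ 0 := sub_ne_zero.2 hxz
        have hd : dΛ ≤ ‖x - z‖ ^ 2 := hdΛ.2 ⟨x - z, hmem, hne, rfl⟩
        have hid : ‖(x-y) - (z-y)‖^2
            = ‖x-y‖^2 - 2 * (inner ℝ (x-y) (z-y) : ℝ) + ‖z-y‖^2 := norm_sub_sq_real _ _
        have heq : (x-y) - (z-y) = x - z := by abel
        rw [heq] at hid
        nlinarith [hxS.2, hzS.2]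
      have hsum : (0:ℝ) ≤ ∑ x ∈ t, ∑ z ∈ t, (inner ℝ (x-y) (z-y) : ℝ) := by
        have hrw : ∑ x ∈ t, ∑ z ∈ t, (inner ℝ (x-y) (z-y) : ℝ)
            = (inner ℝ (∑ x ∈ t, (x - y)) (∑ z ∈ t, (z - y)) : ℝ) := by
          rw [sum_inner]
          exact Finset.sum_congr rfl fun x _ => (inner_sum _ _ _).symm
        rw [hrw]
        exact real_inner_self_nonneg
      have hrowbound : ∀ x ∈ t, ∑ z ∈ t, (inner ℝ (x-y) (z-y) : ℝ)
          ≤ r + (m - 1) * (r - dΛ/2) := by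
        intro x hx
        rw [← Finset.add_sum_erase t _ hx]
        have h2 : ∑ z ∈ t.erase x, (inner ℝ (x-y) (z-y) : ℝ)
            ≤ (t.erase x).card • (r - dΛ/2) :=
          Finset.sum_le_card_nsmul _ _ _
            (fun z hz => hoff x hx z (mem_of_mem_erase hz) (Ne.symm (ne_of_mem_erase hz)))
        rw [Finset.card_erase_of_mem hx, nsmul_eq_mul] at h2
        have hcast : ((t.card - 1 : ℕ) : ℝ) = m - 1 := by
          rw [Nat.cast_sub h1]; simp [hm]
        rw [hcast] at h2
        have := hdiag x hx
        linarith
      have hbound : ∑ x ∈ t, ∑ z ∈ t, (inner ℝ (x-y) (z-y) : ℝ)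
          ≤ m * (r + (m - 1) * (r - dΛ/2)) := by
        have h3 : ∑ x ∈ t, ∑ z ∈ t, (inner ℝ (x-y) (z-y) : ℝ)
            ≤ t.card • (r + (m - 1) * (r - dΛ/2)) :=
          Finset.sum_le_card_nsmul _ _ _ hrowbound
        rwa [nsmul_eq_mul] at h3
      have hmain : (0:ℝ) ≤ m * (r + (m - 1) * (r - dΛ/2)) := le_trans hsum hbound
      -- From 0 ≤ m(r + (m-1)(r - dΛ/2)) with m ≥ 1 derive m ≤ 1/(2ε)
      have hstep : (m - 1) * (dΛ/2 - r) ≤ r := by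
        have hmpos : 0 < m := lt_of_lt_of_le one_pos hm1
        nlinarith
      have hgap : ε * dΛ ≤ dΛ/2 - r := by nlinarith
      have hstep2 : (m - 1) * (ε * dΛ) ≤ r := by
        have h4 : (m - 1) * (ε * dΛ) ≤ (m - 1) * (dΛ/2 - r) :=
          mul_le_mul_of_nonneg_left hgap (by linarith)
        linarith
      -- r ≤ dΛ*(1/2 - ε), divide by dΛ
      have hfinal : m * ε ≤ 1/2 := by nlinarith
      rw [le_div_iff₀ (by positivity)]
      linarith
  have hfin : S.Finite := by
    by_contra hinf
    have hinf' : S.Infinite := hinf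
    obtain ⟨t, hts, htc⟩ := hinf'.exists_subset_card_eq (⌊1/(2*ε)⌋₊ + 1)
    have h1 := key t hts
    rw [htc] at h1
    have h2 : (1/(2*ε) : ℝ) < ((⌊1/(2*ε)⌋₊ + 1 : ℕ) : ℝ) := by
      push_cast
      exact Nat.lt_floor_add_one _
    linarith
  refine ⟨hfin, ?_⟩
  have hnc : S.ncard = hfin.toFinset.card := by
    rw [← Set.ncard_coe_finset, hfin.coe_toFinset]
  rw [hnc]
  exact key hfin.toFinset (by rw [hfin.coe_toFinset])
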